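/- Let B = closedBall(c, r) ⊆ ℝ^n with r > 0. If a periodic billiard trajectory q_1, …, q_m on B has length exactly 4r, then m = 2, q_1 + q_2 = 2c, and ‖q_1 − q_2‖ = 2r; that is, the trajectory is a bouncing ball orbit along a diameter of B. -/

import Mathlib

open scoped RealInnerProductSpace Pointwise
open Metric

noncomputable section

/-- Euclidean space ℝ^n. -/
abbrev Euc (n : ℕ) := EuclideanSpace ℝ (Fin n)

/-- The image of a closed polygon with vertices `q 0, …, q (m-1)` (indices mod `m`):
the union of the segments `[q i, q (i+1)]`. -/
def polyImage {n m : ℕ} [NeZero m] (q : Fin m → Euc n) : Set (Euc n) :=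
  ⋃ i : Fin m, segment ℝ (q i) (q (i + 1))

/-- The length of a closed polygon: `∑ i, ‖q (i+1) - q i‖`. -/
noncomputable def polyLength {n m : ℕ} [NeZero m] (q : Fin m → Euc n) : ℝ :=
  ∑ i : Fin m, ‖q (i + 1) - q i‖

/-- A convex body: a compact convex set with nonempty interior. -/
def IsConvexBody {n : ℕ} (K : Set (Euc n)) : Prop :=
  IsCompact K ∧ Convex ℝ K ∧ (interior K).Nonempty

/-- A closed polygon belongs to `𝒫⁺(K)` if no translate of its image is contained
in the interior of `K`. -/
def InPPlus {n m : ℕ} [NeZero m] (K : Set (Euc n)) (q : Fin m → Euc n) : Prop :=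
  ∀ x : Euc n, ¬ ((fun p => p + x) '' polyImage q ⊆ interior K)

/-- Unit direction of the `i`-th edge of a closed polygon. -/
noncomputable def dir {n m : ℕ} [NeZero m] (q : Fin m → Euc n) (i : Fin m) : Euc n :=
  ‖q (i + 1) - q i‖⁻¹ • (q (i + 1) - q i)

/-- Outer normal `ν i = u (i-1) - u i` at the `i`-th vertex. -/
noncomputable def normalVec {n m : ℕ} [NeZero m] (q : Fin m → Euc n) (i : Fin m) : Euc n :=
  dir q (i - 1) - dir q i

/-- A periodic billiard trajectory on a convex body `K`. -/
def IsBilliard {n m : ℕ} [NeZero m] (K : Set (Euc n)) (q : Fin m → Euc n) : Prop :=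
  2 ≤ m ∧ (∀ i, q (i + 1) ≠ q i) ∧ (∀ i, q i ∈ K) ∧
    ∀ i, normalVec q i ≠ 0 ∧ ∀ x ∈ K, ⟪x - q i, normalVec q i⟫ ≤ 0

/-- A support-type condition on a ball forces the point to lie on the sphere and the
normal to be a positive multiple of the radius vector. -/
lemma sphere_normal_aux {n : ℕ} {c : Euc n} {r : ℝ} (hr : 0 < r) {p ν : Euc n}
    (hp : p ∈ closedBall c r) (hν : ν ≠ 0)
    (h : ∀ x ∈ closedBall c r, ⟪x - p, ν⟫ ≤ 0) :
    ‖p - c‖ = r ∧ ν = ‖ν‖ • (r⁻¹ • (p - c)) := by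
  have hν0 : 0 < ‖ν‖ := norm_pos_iff.mpr hν
  have hx : c + (r * ‖ν‖⁻¹) • ν ∈ closedBall c r := by
    rw [mem_closedBall, dist_eq_norm]
    have : c + (r * ‖ν‖⁻¹) • ν - c = (r * ‖ν‖⁻¹) • ν := by abel
    rw [this, norm_smul]
    rw [Real.norm_eq_abs, abs_of_pos (by positivity)]
    rw [mul_assoc, inv_mul_cancel₀ hν0.ne', mul_one]
  have h1 := h _ hx
  have he : c + (r * ‖ν‖⁻¹) • ν - p = (c - p) + (r * ‖ν‖⁻¹) • ν := by abel
  rw [he, inner_add_left, real_inner_smul_left, real_inner_self_eq_norm_sq] at h1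
  have h2 : r * ‖ν‖⁻¹ * ‖ν‖ ^ 2 = r * ‖ν‖ := by field_simp
  rw [h2] at h1
  have h3 : ⟪c - p, ν⟫ = - ⟪p - c, ν⟫ := by
    rw [← neg_sub]; exact inner_neg_left _ _
  rw [h3] at h1
  have hCS : ⟪p - c, ν⟫ ≤ ‖p - c‖ * ‖ν‖ := real_inner_le_norm _ _
  have hle : ‖p - c‖ ≤ r := by rwa [mem_closedBall, dist_eq_norm] at hp
  have hnn : 0 ≤ ‖p - c‖ := norm_nonneg _
  have hreq : ‖p - c‖ = r := by nlinarith
  have hIeq : ⟪p - c, ν⟫ = ‖p - c‖ * ‖ν‖ := by nlinarith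
  refine ⟨hreq, ?_⟩
  have h4 := inner_eq_norm_mul_iff_real.mp hIeq
  rw [hreq] at h4
  rw [smul_comm, h4, smul_smul, inv_mul_cancel₀ hr.ne', one_smul]

set_option maxHeartbeats 1000000 in
theorem stmt8 {n m : ℕ} [NeZero m] (c : Euc n) (r : ℝ) (hr : 0 < r)
    (q : Fin m → Euc n) (hq : IsBilliard (Metric.closedBall c r) q)
    (hlen : polyLength q = 4 * r) :
    m = 2 ∧ (∀ i : Fin m, q i + q (i + 1) = c + c) ∧
      (∀ i : Fin m, ‖q i - q (i + 1)‖ = 2 * r) := by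
  obtain ⟨hm2, hne, hmem, hrefl0⟩ := hq
  have hνne : ∀ i, normalVec q i ≠ 0 := fun i => (hrefl0 i).1
  have key : ∀ i : Fin m, ‖q i - c‖ = r ∧
      normalVec q i = ‖normalVec q i‖ • (r⁻¹ • (q i - c)) := fun i =>
    sphere_normal_aux hr (hmem i) (hνne i) (hrefl0 i).2
  set a : Fin m → Euc n := fun i => r⁻¹ • (q i - c) with ha_def
  have hq_a : ∀ j, q j = c + r • a j := by
    intro j
    rw [ha_def]; simp only [smul_smul, mul_inv_cancel₀ hr.ne', one_smul]; abel
  have hunit : ∀ i, ‖a i‖ = 1 := by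
    intro i
    rw [ha_def]
    simp only [norm_smul, Real.norm_eq_abs, abs_of_pos (inv_pos.mpr hr), (key i).1]
    field_simp
  have hedge : ∀ i, q (i + 1) - q i = r • (a (i + 1) - a i) := by
    intro i
    rw [smul_sub, ha_def]
    simp only [smul_smul, mul_inv_cancel₀ hr.ne', one_smul]
    abel
  set d : Fin m → ℝ := fun i => ‖a (i + 1) - a i‖ with hd_def
  have hlen_i : ∀ i, ‖q (i + 1) - q i‖ = r * d i := by
    intro i; rw [hedge i, norm_smul, Real.norm_eq_abs, abs_of_pos hr]
  have hdpos : ∀ i, 0 < d i := by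
    intro i
    have h1 : q (i + 1) - q i ≠ 0 := sub_ne_zero.mpr (hne i)
    have h2 : 0 < ‖q (i + 1) - q i‖ := norm_pos_iff.mpr h1
    rw [hlen_i i] at h2; nlinarith
  have hdir : ∀ i, dir q i = (d i)⁻¹ • (a (i + 1) - a i) := by
    intro i
    rw [dir, hlen_i, hedge, smul_smul]
    congr 1
    field_simp [hr.ne', (hdpos i).ne']
  have hinner : ∀ i, ⟪a i, a (i + 1)⟫ = 1 - (d i) ^ 2 / 2 := by
    intro i
    have h2 := norm_sub_sq_real (a (i + 1)) (a i)
    rw [hunit, hunit] at h2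
    have h3 : ⟪a i, a (i + 1)⟫ = ⟪a (i + 1), a i⟫ := real_inner_comm _ _
    have h4 : d i ^ 2 = ‖a (i + 1) - a i‖ ^ 2 := rfl
    rw [h4, h2, h3]; ring
  have hself : ∀ i : Fin m, ⟪a i, a i⟫ = (1 : ℝ) := by
    intro i; rw [real_inner_self_eq_norm_sq, hunit]; norm_num
  have hua : ∀ i, ⟪dir q i, a i⟫ = -(d i) / 2 := by
    intro i
    have h1 : ⟪a (i + 1) - a i, a i⟫ = ⟪a (i + 1), a i⟫ - ⟪a i, a i⟫ := inner_sub_left _ _ _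
    have h2 : ⟪a (i + 1), a i⟫ = 1 - d i ^ 2 / 2 := by rw [real_inner_comm]; exact hinner i
    rw [hdir i, real_inner_smul_left, h1, h2, hself i]
    field_simp [(hdpos i).ne']
    ring
  have hua' : ∀ i, ⟪dir q i, a (i + 1)⟫ = d i / 2 := by
    intro i
    have h1 : ⟪a (i + 1) - a i, a (i + 1)⟫ = ⟪a (i + 1), a (i + 1)⟫ - ⟪a i, a (i + 1)⟫ :=
      inner_sub_left _ _ _
    rw [hdir i, real_inner_smul_left, h1, hself (i + 1), hinner i]
    field_simp [(hdpos i).ne']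
    ring
  have hunit_dir : ∀ i, ‖dir q i‖ = 1 := by
    intro i
    have h1 : q (i + 1) - q i ≠ 0 := sub_ne_zero.mpr (hne i)
    rw [dir, norm_smul, Real.norm_eq_abs, abs_of_pos (inv_pos.mpr (norm_pos_iff.mpr h1)),
      inv_mul_cancel₀ (norm_pos_iff.mpr h1).ne']
  set t : Fin m → ℝ := fun i => ‖normalVec q i‖ with ht_def
  have htpos : ∀ i, 0 < t i := fun i => norm_pos_iff.mpr (hνne i)
  have hreflect : ∀ i, dir q (i - 1) = dir q i + t i • a i := by
    intro i
    have h2 : normalVec q i = t i • a i := by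
      show normalVec q i = ‖normalVec q i‖ • (r⁻¹ • (q i - c))
      exact (key i).2
    rw [normalVec] at h2
    have h3 := sub_eq_iff_eq_add.mp h2
    rw [h3, add_comm]
  have ht_eq_d : ∀ i, t i = d i := by
    intro i
    have h1 : ‖dir q (i - 1)‖ ^ 2 = ‖dir q i + t i • a i‖ ^ 2 := by rw [hreflect i]
    rw [norm_add_sq_real, real_inner_smul_right, hua i, hunit_dir, hunit_dir, norm_smul,
      Real.norm_eq_abs, abs_of_pos (htpos i), hunit] at h1
    have := htpos i
    nlinarith
  open Fin.CommRing in
  have hd_step : ∀ i, d (i - 1) = d i := by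
    intro i
    have h1 : ⟪dir q (i - 1), a ((i - 1) + 1)⟫ = d (i - 1) / 2 := hua' (i - 1)
    have h2 : (i - 1) + 1 = i := by ring
    rw [h2] at h1
    have h3 : ⟪dir q (i - 1), a i⟫ = -(d i) / 2 + t i := by
      rw [hreflect i, inner_add_left, real_inner_smul_left, hua i, hself i]
      ring
    rw [ht_eq_d i] at h3
    linarith
  open Fin.CommRing in
  have hd_const : ∀ i, d i = d 0 := by
    have hnat : ∀ k : ℕ, d (k : Fin m) = d 0 := by
      intro k
      induction k with
      | zero => simp
      | succ k ih =>
        have h := hd_step ((k + 1 : ℕ) : Fin m)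
        have hc : ((k + 1 : ℕ) : Fin m) - 1 = (k : Fin m) := by push_cast; ring
        rw [hc, ih] at h
        exact h.symm
    intro i
    rw [← Fin.cast_val_eq_self i]
    exact hnat i.val
  open Fin.CommRing in
  have hrec : ∀ i : Fin m, a i - a (i - 1) = (a (i + 1) - a i) + (d 0 ^ 2) • a i := by
    intro i
    have h1' : (d 0) • dir q (i - 1) = a i - a (i - 1) := by
      rw [hdir (i - 1), show (i - 1) + 1 = i by ring, hd_const (i - 1), smul_smul,
        mul_inv_cancel₀ (hdpos 0).ne', one_smul]
    have h2' : (d 0) • dir q i = a (i + 1) - a i := by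
      rw [hdir i, hd_const i, smul_smul, mul_inv_cancel₀ (hdpos 0).ne', one_smul]
    rw [← h1', hreflect i, smul_add, h2', ht_eq_d i, hd_const i, smul_smul, ← sq]
  -- length gives m * d 0 = 4
  have hmpos : 0 < m := NeZero.pos m
  have hsum : polyLength q = r * ((m : ℝ) * d 0) := by
    rw [polyLength]
    rw [Finset.sum_congr rfl (fun i _ => by rw [hlen_i i, hd_const i])]
    rw [Finset.sum_const, Finset.card_univ, Fintype.card_fin, nsmul_eq_mul]
    ring
  have hd0 : (m : ℝ) * d 0 = 4 := by
    rw [hsum] at hlen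
    have h1 : r * ((m : ℝ) * d 0) = r * 4 := by linarith
    exact mul_left_cancel₀ hr.ne' h1
  -- m = 2
  open Fin.CommRing in
  have hm_eq : m = 2 := by
    by_contra hne2
    have hm3 : 3 ≤ m := by omega
    set M : ℝ := (m : ℝ) with hM
    have hM3 : (3 : ℝ) ≤ M := by rw [hM]; exact_mod_cast hm3
    have hMpos : (0 : ℝ) < M := by linarith
    set s : ℝ := 2 / M with hs
    have hs0 : 0 < s := by positivity
    have hs23 : s ≤ 2 / 3 := div_le_div_of_nonneg_left (by norm_num) (by norm_num) hM3
    have hs1 : s ≤ 1 := by linarith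
    have hd0s : d 0 = 2 * s := by
      rw [hs]
      field_simp
      linarith [hd0]
    set θ : ℝ := 2 * Real.arcsin s with hθ
    have harc0 : 0 < Real.arcsin s := Real.arcsin_pos.mpr hs0
    have hθ0 : 0 < θ := by rw [hθ]; linarith
    have hcosθ : Real.cos θ = 1 - 2 * s ^ 2 := by
      rw [hθ, Real.cos_two_mul, Real.cos_arcsin, Real.sq_sqrt (by nlinarith)]
      ring
    -- the sine bound
    have hsin : s < Real.sin (Real.pi / M) := by
      rcases Nat.lt_or_ge m 4 with h4 | h4
      · have hm3' : m = 3 := by omega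
        have hM3' : M = 3 := by rw [hM, hm3']; norm_num
        have hs3 : s = 2 / 3 := by rw [hs, hM3']
        rw [hM3', hs3, Real.sin_pi_div_three]
        have h3 : Real.sqrt 3 ^ 2 = 3 := Real.sq_sqrt (by norm_num)
        nlinarith [Real.sqrt_nonneg 3]
      · have hM4 : (4 : ℝ) ≤ M := by rw [hM]; exact_mod_cast h4
        have hπle : Real.pi / M ≤ Real.pi / 4 :=
          div_le_div_of_nonneg_left Real.pi_pos.le (by norm_num) hM4
        have hx0 : 0 < Real.pi / M := by positivity
        have hx1 : Real.pi / M ≤ 1 := by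
          nlinarith [Real.pi_lt_d2]
        have hcube : Real.pi / M - (Real.pi / M) ^ 3 / 4 < Real.sin (Real.pi / M) := by
          have := Real.sin_gt_sub_cube hx0; nlinarith [pow_pos hx0 3]
        have hkey : s ≤ Real.pi / M - (Real.pi / M) ^ 3 / 4 := by
          rw [hs]
          have h2M : 2 / M = 2 * (Real.pi / M) / Real.pi := by
            field_simp [Real.pi_pos.ne']
          rw [h2M, div_le_iff₀ Real.pi_pos]
          have hy2 : (Real.pi / M) ^ 2 ≤ (Real.pi / 4) ^ 2 := by nlinarith
          have hy3 : (Real.pi / M) ^ 2 * (Real.pi / M) ≤ (Real.pi / 4) ^ 2 * (Real.pi / M) :=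
            mul_le_mul_of_nonneg_right hy2 hx0.le
          have hnum : (0:ℝ) ≤ Real.pi - Real.pi ^ 3 / 64 - 2 := by
            nlinarith [Real.pi_gt_d6, Real.pi_lt_d2]
          nlinarith [mul_nonneg hx0.le hnum, hy3, Real.pi_gt_d6, Real.pi_lt_d2, hx0]
        linarith
    have harc : Real.arcsin s < Real.pi / M := by
      have hmem1 : s ∈ Set.Icc (-1 : ℝ) 1 := ⟨by linarith, hs1⟩
      have hπM2 : Real.pi / M ≤ Real.pi / 2 := by
        have := div_le_div_of_nonneg_left Real.pi_pos.le (by norm_num : (0:ℝ) < 2)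
          (by linarith : (2:ℝ) ≤ M)
        linarith
      have hmem2 : Real.pi / M ∈ Set.Icc (-(Real.pi / 2)) (Real.pi / 2) := by
        constructor
        · have : 0 < Real.pi / M := by positivity
          nlinarith [Real.pi_pos]
        · exact hπM2
      exact (Real.arcsin_lt_iff_lt_sin hmem1 hmem2).mpr hsin
    have hMθ : M * θ < 2 * Real.pi := by
      have h1 : M * Real.arcsin s < M * (Real.pi / M) := by
        exact mul_lt_mul_of_pos_left harc hMpos
      have h2 : M * (Real.pi / M) = Real.pi := by field_simp
      rw [hθ]; nlinarith [h1, h2]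
    -- the scalar sequence
    set x : ℕ → ℝ := fun k => ⟪a ((0 : ℕ) : Fin m), a ((k : ℕ) : Fin m)⟫ with hx_def
    have hxrec : ∀ k : ℕ, x (k + 2) + x k = (2 - d 0 ^ 2) * x (k + 1) := by
      intro k
      have h := hrec ((k + 1 : ℕ) : Fin m)
      have e1 : ((k + 1 : ℕ) : Fin m) - 1 = (k : Fin m) := by push_cast; ring
      have e2 : ((k + 1 : ℕ) : Fin m) + 1 = ((k + 2 : ℕ) : Fin m) := by push_cast; ring
      rw [e1, e2] at h
      have h2 := congrArg (fun v => ⟪a ((0 : ℕ) : Fin m), v⟫) h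
      simp only [inner_sub_right, inner_add_right, real_inner_smul_right] at h2
      show ⟪a ((0 : ℕ) : Fin m), a ((k + 2 : ℕ) : Fin m)⟫ +
        ⟪a ((0 : ℕ) : Fin m), a ((k : ℕ) : Fin m)⟫ =
        (2 - d 0 ^ 2) * ⟪a ((0 : ℕ) : Fin m), a ((k + 1 : ℕ) : Fin m)⟫
      linarith [h2]
    have hx0' : x 0 = 1 := hself _
    have hx1' : x 1 = Real.cos θ := by
      have e0 : ((0 : ℕ) : Fin m) = (0 : Fin m) := Nat.cast_zero
      have e1 : ((1 : ℕ) : Fin m) = (0 : Fin m) + 1 := by push_cast; ring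
      show ⟪a ((0 : ℕ) : Fin m), a ((1 : ℕ) : Fin m)⟫ = Real.cos θ
      rw [e0, e1, hinner 0, hd_const 0, hcosθ, hd0s]
      ring
    have hx2step : ∀ k : ℕ, x k = Real.cos (k * θ) ∧ x (k + 1) = Real.cos ((k + 1 : ℕ) * θ) := by
      intro k
      induction k with
      | zero =>
        constructor
        · rw [hx0']; norm_num
        · rw [hx1']; norm_num
      | succ k ih =>
        refine ⟨ih.2, ?_⟩
        have h := hxrec k
        rw [ih.1, ih.2] at h
        have hc2 : 2 - d 0 ^ 2 = 2 * Real.cos θ := by rw [hcosθ, hd0s]; ring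
        rw [hc2] at h
        have e : ((k + 1 + 1 : ℕ) : ℝ) * θ = ((k + 1 : ℕ) : ℝ) * θ + θ := by push_cast; ring
        have e' : ((k : ℕ) : ℝ) * θ = ((k + 1 : ℕ) : ℝ) * θ - θ := by push_cast; ring
        rw [e, Real.cos_add]
        rw [e', Real.cos_sub] at h
        linarith [h]
    have hxm : x m = 1 := by
      have em : ((m : ℕ) : Fin m) = ((0 : ℕ) : Fin m) := by
        rw [Fin.natCast_self, Nat.cast_zero]
      show ⟪a ((0 : ℕ) : Fin m), a ((m : ℕ) : Fin m)⟫ = 1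
      rw [em]
      exact hself _
    have hcos1 : Real.cos (M * θ) = 1 := by
      have := (hx2step m).1
      rw [hxm] at this
      rw [hM]
      exact this.symm
    have hlow : -(2 * Real.pi) < M * θ := by
      have : 0 < M * θ := mul_pos hMpos hθ0
      nlinarith [Real.pi_pos]
    have hzero := (Real.cos_eq_one_iff_of_lt_of_lt hlow hMθ).mp hcos1
    nlinarith [mul_pos hMpos hθ0]
  -- conclusions
  subst hm_eq
  have hd2 : d 0 = 2 := by
    have : ((2 : ℕ) : ℝ) * d 0 = 4 := hd0
    norm_num at this
    linarith
  have hneg : ∀ i, a (i + 1) = -a i := by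
    intro i
    have h := hinner i
    rw [hd_const i, hd2] at h
    have hz : ‖a (i + 1) + a i‖ ^ 2 = 0 := by
      rw [norm_add_sq_real, hunit, hunit, real_inner_comm, h]
      norm_num
    have hz2 : a (i + 1) + a i = 0 := by
      have := (norm_eq_zero).mp (by nlinarith [norm_nonneg (a (i + 1) + a i)] : ‖a (i + 1) + a i‖ = 0)
      exact this
    have : a (i + 1) = -a i := by
      have := hz2
      linear_combination (norm := abel) this
    exact this
  refine ⟨rfl, ?_, ?_⟩
  · intro i
    rw [hq_a i, hq_a (i + 1), hneg i, smul_neg]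
    abel
  · intro i
    rw [norm_sub_rev, hlen_i i, hd_const i, hd2]
    ring
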